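/- An invertible matrix Q ∈ ℝ^{n×n} maps the nonnegative orthant onto itself (i.e., Q·ℝ^n_{≥0} = ℝ^n_{≥0}) if and only if Q is a nonnegative monomial matrix. -/
import Mathlib


open scoped Matrix

/-- The permutation matrix of `σ`. -/
def permMat {n : ℕ} (σ : Equiv.Perm (Fin n)) : Matrix (Fin n) (Fin n) ℝ :=
  Matrix.of fun i j => if σ j = i then 1 else 0

theorem maps_orthant_onto_iff_monomial (n : ℕ) (Q : Matrix (Fin n) (Fin n) ℝ)
    (hQ : IsUnit Q) :
    Q.mulVec '' {x | ∀ i, 0 ≤ x i} = {x | ∀ i, 0 ≤ x i} ↔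
      ∃ (σ : Equiv.Perm (Fin n)) (d : Fin n → ℝ),
        (∀ i, 0 < d i) ∧ Q = permMat σ * Matrix.diagonal d := by
  have hd : IsUnit Q.det := (Matrix.isUnit_iff_isUnit_det Q).mp hQ
  have hQB : Q * Q⁻¹ = 1 := Matrix.mul_nonsing_inv Q hd
  have hBQ : Q⁻¹ * Q = 1 := Matrix.nonsing_inv_mul Q hd
  set B := Q⁻¹ with hBdef
  have hQinj : ∀ x y, Q.mulVec x = Q.mulVec y → x = y := by
    intro x y hxy
    have h1 : B.mulVec (Q.mulVec x) = B.mulVec (Q.mulVec y) := by rw [hxy]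
    rwa [Matrix.mulVec_mulVec, Matrix.mulVec_mulVec, hBQ, Matrix.one_mulVec,
      Matrix.one_mulVec] at h1
  have hBinj : ∀ x y, B.mulVec x = B.mulVec y → x = y := by
    intro x y hxy
    have h1 : Q.mulVec (B.mulVec x) = Q.mulVec (B.mulVec y) := by rw [hxy]
    rwa [Matrix.mulVec_mulVec, Matrix.mulVec_mulVec, hQB, Matrix.one_mulVec,
      Matrix.one_mulVec] at h1
  constructor
  · intro h
    -- Q is entrywise nonnegative
    have hQn : ∀ i j, 0 ≤ Q i j := by
      intro i j
      have hmem : (Pi.single j (1:ℝ)) ∈ {x : Fin n → ℝ | ∀ i, 0 ≤ x i} := by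
        intro k
        rcases eq_or_ne k j with rfl | hk
        · simp
        · simp [Pi.single_apply, hk]
      have : Q.mulVec (Pi.single j 1) ∈ {x : Fin n → ℝ | ∀ i, 0 ≤ x i} := by
        rw [← h]; exact ⟨_, hmem, rfl⟩
      have := this i
      simpa using this
    -- B = Q⁻¹ is entrywise nonnegative
    have hBn : ∀ i j, 0 ≤ B i j := by
      intro i j
      have hmem : (Pi.single j (1:ℝ)) ∈ {x : Fin n → ℝ | ∀ i, 0 ≤ x i} := by
        intro k
        rcases eq_or_ne k j with rfl | hk
        · simp
        · simp [Pi.single_apply, hk]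
      rw [← h] at hmem
      obtain ⟨x, hx, hxe⟩ := hmem
      have : B.mulVec (Pi.single j 1) = x := by
        rw [← hxe, Matrix.mulVec_mulVec, hBQ, Matrix.one_mulVec]
      have h2 : 0 ≤ B.mulVec (Pi.single j 1) i := this ▸ hx i
      simpa using h2
    -- every column of Q has a nonzero entry
    have hcol : ∀ j, ∃ i, Q i j ≠ 0 := by
      intro j
      by_contra hc
      push_neg at hc
      have h0 : Q.mulVec (Pi.single j 1) = Q.mulVec 0 := by
        rw [Matrix.mulVec_zero]
        funext i
        simp [hc i]
      have := hQinj _ _ h0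
      have := congrFun this j
      simp at this
    -- every column of B has a nonzero entry
    have hBcol : ∀ j, ∃ i, B i j ≠ 0 := by
      intro j
      by_contra hc
      push_neg at hc
      have h0 : B.mulVec (Pi.single j 1) = B.mulVec 0 := by
        rw [Matrix.mulVec_zero]
        funext i
        simp [hc i]
      have := hBinj _ _ h0
      have := congrFun this j
      simp at this
    -- each column of Q has at most one nonzero entry
    have hBzero : ∀ j k j', Q k j ≠ 0 → j' ≠ j → B j' k = 0 := by
      intro j k j' hk hj'
      have h0 : (B * Q) j' j = 0 := by
        rw [hBQ, Matrix.one_apply_ne hj']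
      rw [Matrix.mul_apply] at h0
      have hterm := (Finset.sum_eq_zero_iff_of_nonneg
        (fun k _ => mul_nonneg (hBn j' k) (hQn k j))).mp h0 k (Finset.mem_univ k)
      exact (mul_eq_zero.mp hterm).resolve_right hk
    have key : ∀ j i i', Q i j ≠ 0 → Q i' j ≠ 0 → i = i' := by
      intro j i i' hi hi'
      by_contra hii
      have hBji : B j i ≠ 0 := by
        obtain ⟨k, hk⟩ := hBcol i
        rcases eq_or_ne k j with rfl | hkj
        · exact hk
        · exact absurd (hBzero j i k hi hkj) hk
      have hBji' : B j i' ≠ 0 := by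
        obtain ⟨k, hk⟩ := hBcol i'
        rcases eq_or_ne k j with rfl | hkj
        · exact hk
        · exact absurd (hBzero j i' k hi' hkj) hk
      set x : Fin n → ℝ := Pi.single i (B j i') - Pi.single i' (B j i) with hxdef
      have hmv : B.mulVec x = B.mulVec 0 := by
        rw [Matrix.mulVec_zero, hxdef, Matrix.mulVec_sub]
        funext k
        rcases eq_or_ne k j with rfl | hkj
        · simp [mul_comm]
        · simp [hBzero j i k hi hkj, hBzero j i' k hi' hkj]
      have hx0 := congrFun (hBinj _ _ hmv) i
      rw [hxdef] at hx0
      simp [Pi.single_apply, hii, Ne.symm hii] at hx0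
      exact hBji' hx0
    -- define the permutation
    choose σ0 hσ0 using hcol
    have hzero : ∀ i j, i ≠ σ0 j → Q i j = 0 := by
      intro i j hij
      by_contra hc
      exact hij (key j i (σ0 j) hc (hσ0 j))
    have hσinj : Function.Injective σ0 := by
      intro j j' hjj
      by_contra hne
      set i := σ0 j with hidef
      set x : Fin n → ℝ := Pi.single j (Q i j') - Pi.single j' (Q i j) with hxdef
      have hmv : Q.mulVec x = Q.mulVec 0 := by
        rw [Matrix.mulVec_zero, hxdef, Matrix.mulVec_sub]
        funext k
        rcases eq_or_ne k i with rfl | hki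
        · simp [mul_comm]
        · have h1 : Q k j = 0 := hzero k j hki
          have h2 : Q k j' = 0 := hzero k j' (by rw [← hjj]; exact hki)
          simp [h1, h2]
      have hx0 := congrFun (hQinj _ _ hmv) j
      rw [hxdef] at hx0
      simp [Pi.single_apply, hne, Ne.symm hne] at hx0
      have : Q i j' ≠ 0 := by rw [hjj]; exact hσ0 j'
      exact this hx0
    have hσbij : Function.Bijective σ0 := (Finite.injective_iff_bijective).mp hσinj
    refine ⟨Equiv.ofBijective σ0 hσbij, fun j => Q (σ0 j) j, fun j => ?_, ?_⟩
    · exact lt_of_le_of_ne (hQn (σ0 j) j) (Ne.symm (hσ0 j))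
    · ext i j
      rw [Matrix.mul_diagonal]
      show Q i j = permMat (Equiv.ofBijective σ0 hσbij) i j * Q (σ0 j) j
      rw [permMat]
      simp only [Matrix.of_apply, Equiv.ofBijective_apply]
      rcases eq_or_ne (σ0 j) i with rfl | hne
      · simp
      · simp [hne, hzero i j (Ne.symm hne)]
  · rintro ⟨σ, d, hdpos, rfl⟩
    have hentry : ∀ i j, (permMat σ * Matrix.diagonal d) i j =
        if σ j = i then d j else 0 := by
      intro i j
      rw [Matrix.mul_diagonal, permMat]
      simp only [Matrix.of_apply]
      split <;> simp
    have hmv : ∀ (x : Fin n → ℝ) i,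
        (permMat σ * Matrix.diagonal d).mulVec x i = d (σ.symm i) * x (σ.symm i) := by
      intro x i
      rw [Matrix.mulVec, dotProduct]
      have : ∀ j, (permMat σ * Matrix.diagonal d) i j * x j =
          if j = σ.symm i then d j * x j else 0 := by
        intro j
        rw [hentry]
        by_cases hj : j = σ.symm i
        · subst hj; simp
        · rw [if_neg (fun hh => hj (by rw [← hh, Equiv.symm_apply_apply])), if_neg hj,
            zero_mul]
      rw [Finset.sum_congr rfl (fun j _ => this j)]
      simp
    ext y
    constructor
    · rintro ⟨x, hx, rfl⟩ i
      rw [hmv]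
      exact mul_nonneg (hdpos _).le (hx _)
    · intro hy
      refine ⟨fun j => y (σ j) / d j, fun j => div_nonneg (hy _) (hdpos j).le, ?_⟩
      funext i
      rw [hmv]
      rw [Equiv.apply_symm_apply]
      exact mul_div_cancel₀ _ (hdpos _).ne'
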